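/- arXiv:1402.0092 — 5 statements merged into one kernel-verified Lean document; each statement's English description precedes it below -/
import Mathlib

section
/- Let W₁ be negative binomial with parameters (p, ℓ), counting failures before the ℓ-th success: P(W₁ = k) = (ℓ(ℓ+1)⋯(ℓ+k−1)/k!)·p^ℓ·(1−p)^k, with mean μ = ℓ(1−p)/p. Regarding P(W₁ = k) as a function of μ (with ℓ fixed and p = ℓ/(μ+ℓ)), its derivative with respect to μ equals P(W₂ = k−1) − P(W₂ = k), where W₂ is negative binomial with parameters (p, ℓ+1). -/
open Finset

/-- Point probability of the negative binomial distribution `nb(ℓ, p)`: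
`P(W = k) = (ℓ(ℓ+1)⋯(ℓ+k−1)/k!)·p^ℓ·(1−p)^k` (rising factorial, real exponent `ℓ`). -/
noncomputable def nbPt (l p : ℝ) (k : ℕ) : ℝ :=
  (∏ i ∈ range k, (l + i)) / (k.factorial : ℝ) * p ^ l * (1 - p) ^ k

/-- Regarding `P(W₁ = k)` for `W₁ ~ nb(p, ℓ)` as a function of the mean `μ = ℓ(1−p)/p`
(so `p = ℓ/(μ+ℓ)`), its derivative in `μ` is `P(W₂ = k−1) − P(W₂ = k)` where
`W₂ ~ nb(p, ℓ+1)` (and `P(W₂ = −1) := 0`). -/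
theorem stmt_7 (l : ℝ) (hl : 0 < l) (μ : ℝ) (hμ : 0 < μ) (k : ℕ) :
    HasDerivAt (fun m : ℝ => nbPt l (l / (m + l)) k)
      ((if k = 0 then 0 else nbPt (l + 1) (l / (μ + l)) (k - 1))
        - nbPt (l + 1) (l / (μ + l)) k) μ := by
  have hml : 0 < μ + l := by linarith
  have hP : 0 < l / (μ + l) := div_pos hl hml
  have hg : HasDerivAt (fun m : ℝ => l / (m + l)) (l * (-1 / (μ + l) ^ 2)) μ := by
    have h0 : HasDerivAt (fun m : ℝ => m + l) 1 μ := (hasDerivAt_id μ).add_const l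
    simpa [div_eq_mul_inv] using (h0.inv hml.ne').const_mul l
  have h1 : HasDerivAt (fun m : ℝ => (l / (m + l)) ^ l)
      (l * (-1 / (μ + l) ^ 2) * l * (l / (μ + l)) ^ (l - 1)) μ :=
    hg.rpow_const (Or.inl hP.ne')
  have h2 : HasDerivAt (fun m : ℝ => (1 - l / (m + l)) ^ k)
      ((k : ℝ) * (1 - l / (μ + l)) ^ (k - 1) * (0 - l * (-1 / (μ + l) ^ 2))) μ :=
    ((hasDerivAt_const μ (1 : ℝ)).sub hg).pow k
  have C := (∏ i ∈ range k, (l + i)) / (k.factorial : ℝ)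
  have hmain := ((h1.const_mul ((∏ i ∈ range k, (l + (i : ℝ))) / (k.factorial : ℝ))).mul h2)
  have hmain2 : HasDerivAt (fun m : ℝ => nbPt l (l / (m + l)) k)
      ((∏ i ∈ range k, (l + (i : ℝ))) / (k.factorial : ℝ) *
          (l * (-1 / (μ + l) ^ 2) * l * (l / (μ + l)) ^ (l - 1)) * (1 - l / (μ + l)) ^ k
        + (∏ i ∈ range k, (l + (i : ℝ))) / (k.factorial : ℝ) * (l / (μ + l)) ^ l *
          ((k : ℝ) * (1 - l / (μ + l)) ^ (k - 1) * (0 - l * (-1 / (μ + l) ^ 2)))) μ := by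
    have hfun : (fun m : ℝ => nbPt l (l / (m + l)) k) = ((fun y => (∏ i ∈ range k, (l + (i : ℝ))) / (k.factorial : ℝ) * (l / (y + l)) ^ l) * fun m => (1 - l / (m + l)) ^ k) := by
      funext m; simp only [nbPt, Pi.mul_apply]
    rw [hfun]; exact hmain
  convert hmain2 using 1
  have hrpow_sub : (l / (μ + l)) ^ (l - 1) = (l / (μ + l)) ^ l / (l / (μ + l)) := by
    rw [Real.rpow_sub hP, Real.rpow_one]
  have hrpow_add : (l / (μ + l)) ^ (l + 1) = (l / (μ + l)) ^ l * (l / (μ + l)) := by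
    rw [Real.rpow_add hP, Real.rpow_one]
  rcases k with _ | n
  · simp only [Nat.factorial, nbPt, hrpow_add, hrpow_sub, ↓reduceIte]
    field_simp
    ring
  · simp only [Nat.succ_ne_zero, if_neg, Nat.succ_sub_one, nbPt, hrpow_add, hrpow_sub]
    have hprod : (∏ i ∈ range (n + 1), (l + (i : ℝ))) = (∏ i ∈ range n, (l + 1 + (i : ℝ))) * l := by
      rw [Finset.prod_range_succ']
      push_cast
      rw [Finset.prod_congr rfl (fun i _ => by ring :
        ∀ i ∈ range n, l + ((i : ℕ) + 1 : ℝ) = l + 1 + (i : ℕ))]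
      norm_num
    have hprod2 : (∏ i ∈ range (n + 1), (l + 1 + (i : ℝ)))
        = (∏ i ∈ range n, (l + 1 + (i : ℝ))) * (l + 1 + n) := Finset.prod_range_succ _ _
    rw [hprod, hprod2, Nat.factorial_succ]
    have hq : (1 : ℝ) - l / (μ + l) = μ / (μ + l) := by field_simp; ring
    rw [hq]
    push_cast
    field_simp
    have hq2 : (μ + l) * (μ / (μ + l)) = μ := by field_simp
    linear_combination (-((n : ℝ) + 1)) * (μ / (μ + l)) ^ n * hq2
end

section
/- With the setup of the previous derivative identity, the derivative with respect to μ of the cumulative probability P(W₁ ≤ k) equals −P(W₂ = k) = −((ℓ+1)(ℓ+2)⋯(ℓ+k)/k!)·p^(ℓ+1)·(1−p)^k. -/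
open Finset

lemma termDeriv (l : ℝ) (hl : 0 < l) (μ : ℝ) (hμ : 0 < μ) (j : ℕ) :
    HasDerivAt (fun m : ℝ => nbPt l (l / (m + l)) j)
      ((∏ i ∈ range j, (l + i)) / (j.factorial : ℝ) *
          (l * (l / (μ + l)) ^ (l - 1) * (-( (l/(μ+l))^2 / l))) * (1 - l / (μ + l)) ^ j +
        (∏ i ∈ range j, (l + i)) / (j.factorial : ℝ) * (l / (μ + l)) ^ l *
          ((j : ℝ) * (1 - l / (μ + l)) ^ (j - 1) * ((l/(μ+l))^2 / l))) μ := by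
  have hml : (0:ℝ) < μ + l := by linarith
  have hp : (0:ℝ) < l / (μ + l) := div_pos hl hml
  have hq : HasDerivAt (fun m : ℝ => l / (m + l)) (-((l/(μ+l))^2 / l)) μ := by
    have h1 : HasDerivAt (fun m : ℝ => m + l) 1 μ := (hasDerivAt_id μ).add_const l
    have h2 := (h1.inv hml.ne').const_mul l
    simp only [div_eq_mul_inv]
    refine h2.congr_deriv ?_
    field_simp
  have hu : HasDerivAt (fun m : ℝ => (l / (m + l)) ^ l)
      (l * (l/(μ+l)) ^ (l - 1) * (-((l/(μ+l))^2 / l))) μ := by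
    have := (Real.hasDerivAt_rpow_const (p := l) (Or.inl hp.ne')).comp μ hq
    exact this
  have hv : HasDerivAt (fun m : ℝ => (1 - l / (m + l)) ^ j)
      ((j : ℝ) * (1 - l/(μ+l)) ^ (j - 1) * ((l/(μ+l))^2 / l)) μ := by
    have := (hasDerivAt_pow j (1 - l/(μ+l))).comp μ (hq.const_sub 1)
    refine this.congr_deriv ?_
    ring
  have := ((hu.const_mul ((∏ i ∈ range j, (l + i)) / (j.factorial : ℝ))).mul hv)
  simpa [nbPt, Pi.mul_def, mul_assoc, mul_comm, mul_left_comm] using this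

lemma stepAlg (l p : ℝ) (hl : 0 < l) (hp : 0 < p) (k : ℕ) :
    -(nbPt (l+1) p k) +
      ((∏ i ∈ range (k+1), (l + (i:ℝ))) / ((k+1).factorial : ℝ) *
          (l * p ^ (l - 1) * (-(p^2 / l))) * (1 - p) ^ (k+1) +
        (∏ i ∈ range (k+1), (l + (i:ℝ))) / ((k+1).factorial : ℝ) * p ^ l *
          ((((k+1) : ℕ) : ℝ) * (1 - p) ^ ((k+1) - 1) * (p^2 / l)))
    = -(nbPt (l+1) p (k+1)) := by
  have h1 : p ^ l = p ^ (l-1) * p := by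
    rw [← Real.rpow_add_one hp.ne' (l-1), sub_add_cancel]
  have h2 : p ^ (l+1) = p ^ (l-1) * p * p := by
    rw [Real.rpow_add_one hp.ne' l, h1]
  have hPQ : ∏ i ∈ range (k+1), (l + (i:ℝ)) = (∏ i ∈ range k, (l+1+(i:ℝ))) * l := by
    rw [prod_range_succ']
    simp only [Nat.cast_zero, add_zero]
    congr 1
    apply prod_congr rfl
    intro i _
    push_cast
    ring
  have hfac : (0:ℝ) < (k.factorial : ℝ) := by positivity
  simp only [nbPt, Nat.add_sub_cancel, prod_range_succ, hPQ, Nat.factorial_succ, h1, h2]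
  push_cast
  field_simp
  ring

lemma baseAlg (l p : ℝ) (hl : 0 < l) (hp : 0 < p) :
    -(nbPt (l+1) p 0) =
      (∏ i ∈ range 0, (l + (i:ℝ))) / ((0:ℕ).factorial : ℝ) *
          (l * p ^ (l - 1) * (-(p^2 / l))) * (1 - p) ^ 0 +
        (∏ i ∈ range 0, (l + (i:ℝ))) / ((0:ℕ).factorial : ℝ) * p ^ l *
          (((0:ℕ) : ℝ) * (1 - p) ^ ((0:ℕ) - 1) * (p^2 / l)) := by
  have h1 : p ^ l = p ^ (l-1) * p := by
    rw [← Real.rpow_add_one hp.ne' (l-1), sub_add_cancel]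
  have h2 : p ^ (l+1) = p ^ (l-1) * p * p := by
    rw [Real.rpow_add_one hp.ne' l, h1]
  simp only [nbPt, prod_range_zero, Nat.factorial_zero, h2]
  push_cast
  field_simp
  ring

/-- The derivative in `μ` of `P(W₁ ≤ k)` for `W₁ ~ nb(p, ℓ)` with mean `μ = ℓ(1−p)/p`
(so `p = ℓ/(μ+ℓ)`) equals `−P(W₂ = k) = −((ℓ+1)⋯(ℓ+k)/k!)·p^(ℓ+1)·(1−p)^k`
where `W₂ ~ nb(p, ℓ+1)`. -/
theorem stmt_8 (l : ℝ) (hl : 0 < l) (μ : ℝ) (hμ : 0 < μ) (k : ℕ) :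
    HasDerivAt (fun m : ℝ => ∑ j ∈ range (k + 1), nbPt l (l / (m + l)) j)
      (-(nbPt (l + 1) (l / (μ + l)) k)) μ ∧
    -(nbPt (l + 1) (l / (μ + l)) k)
      = -((∏ i ∈ range k, (l + 1 + i)) / (k.factorial : ℝ) *
          (l / (μ + l)) ^ (l + 1) * (1 - l / (μ + l)) ^ k) := by
  have hml : (0:ℝ) < μ + l := by linarith
  have hp : (0:ℝ) < l / (μ + l) := div_pos hl hml
  constructor
  · induction k with
    | zero =>
      have h := termDeriv l hl μ hμ 0
      have heq0 : (fun m : ℝ => ∑ j ∈ range (0+1), nbPt l (l/(m+l)) j)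
          = fun m : ℝ => nbPt l (l/(m+l)) 0 := by
        funext m; simp
      rw [heq0, baseAlg l (l/(μ+l)) hl hp]
      exact h
    | succ k ih =>
      have hsum := ih.add (termDeriv l hl μ hμ (k+1))
      have heq : (fun m : ℝ => (∑ j ∈ range (k+1), nbPt l (l/(m+l)) j)
            + nbPt l (l/(m+l)) (k+1))
          = fun m : ℝ => ∑ j ∈ range (k+1+1), nbPt l (l/(m+l)) j := by
        funext m
        exact (Finset.sum_range_succ _ _).symm
      rw [← heq, ← stepAlg l (l/(μ+l)) hl hp k]
      exact hsum
  · rfl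
end

section
/- For the inverse Gaussian family IG(μ, λ) with fixed λ, define the signed log-likelihood at reference mean μ: g(x) = sign(x − μ)·(2·D(IG(x,λ) ‖ IG(μ,λ)))^(1/2) = λ^(1/2)·(x − μ)/(x^(1/2)·μ) for x > 0. Then the saddle-point approximation is exact: the density of IG(μ, λ) satisfies f(x) = φ(g(x)) / V(x)^(1/2), where φ is the standard Gaussian density and V(x) = x³/λ is the variance function. -/
open Real

/-- For the inverse Gaussian family `IG(μ, λ)`, the signed log-likelihood is
`g(x) = sign(x−μ)·(2·D(IG(x,λ)‖IG(μ,λ)))^{1/2} = λ^{1/2}(x−μ)/(x^{1/2}μ)`, and the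
saddle-point approximation is exact: `f(x) = φ(g(x))/V(x)^{1/2}` with `V(x) = x³/λ`. -/
theorem stmt_16 (μ lam : ℝ) (hμ : 0 < μ) (hlam : 0 < lam) :
    (∀ x : ℝ, 0 < x →
      Real.sign (x - μ) * Real.sqrt (2 * (lam * (x - μ) ^ 2 / (2 * x * μ ^ 2)))
        = Real.sqrt lam * (x - μ) / (Real.sqrt x * μ)) ∧
    (∀ x : ℝ, 0 < x →
      Real.sqrt (lam / (2 * π * x ^ 3)) * Real.exp (-(lam * (x - μ) ^ 2) / (2 * μ ^ 2 * x))
        = (Real.exp (-(Real.sqrt lam * (x - μ) / (Real.sqrt x * μ)) ^ 2 / 2) /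
            Real.sqrt (2 * π)) / Real.sqrt (x ^ 3 / lam)) := by
  have hπ : (0:ℝ) < π := Real.pi_pos
  constructor
  · intro x hx
    have h1 : 2 * (lam * (x - μ) ^ 2 / (2 * x * μ ^ 2)) = lam * (x - μ) ^ 2 / (x * μ ^ 2) := by
      field_simp
    rw [h1]
    have hsq : lam * (x - μ) ^ 2 / (x * μ ^ 2) = (Real.sqrt lam * |x - μ| / (Real.sqrt x * μ)) ^ 2 := by
      rw [div_pow, mul_pow, mul_pow, sq_abs, Real.sq_sqrt hlam.le, Real.sq_sqrt hx.le]
    rw [hsq, Real.sqrt_sq (by positivity)]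
    rcases lt_trichotomy x μ with h | h | h
    · rw [Real.sign_of_neg (by linarith), abs_of_neg (by linarith)]
      field_simp
    · simp [h]
    · rw [Real.sign_of_pos (by linarith), abs_of_pos (by linarith)]
      ring
  · intro x hx
    have hexp : -(lam * (x - μ) ^ 2) / (2 * μ ^ 2 * x)
        = -(Real.sqrt lam * (x - μ) / (Real.sqrt x * μ)) ^ 2 / 2 := by
      rw [div_pow, mul_pow, mul_pow, Real.sq_sqrt hlam.le, Real.sq_sqrt hx.le]
      ring
    rw [hexp]
    have hcoef : Real.sqrt (lam / (2 * π * x ^ 3))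
        = 1 / (Real.sqrt (2 * π) * Real.sqrt (x ^ 3 / lam)) := by
      rw [← Real.sqrt_mul (by positivity), one_div, ← Real.sqrt_inv]
      congr 1
      field_simp
    rw [hcoef]
    ring
end

section
/- Let W have the inverse Gaussian distribution IG(μ, λ) and let g(x) = λ^(1/2)(x − μ)/(x^(1/2)μ) be its signed log-likelihood transform. Then g(W) is stochastically dominated in the appropriate sense by a standard Gaussian: Φ(g(x)) ≤ P(W ≤ x) for all x ≥ 0, where Φ is the standard Gaussian CDF. A sufficient condition used in the proof: the density of g⁻¹(Z), for Z standard Gaussian, divided by the density of W, equals (x + μ)/(2μ), which is increasing in x. -/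
open Real MeasureTheory
open Filter Set Topology

/-- Density of the inverse Gaussian distribution `IG(μ, λ)` on `(0, ∞)`. -/
noncomputable def igPdf (μ lam x : ℝ) : ℝ :=
  Real.sqrt (lam / (2 * π * x ^ 3)) * Real.exp (-(lam * (x - μ) ^ 2) / (2 * μ ^ 2 * x))

/-- Signed log-likelihood transform of `IG(μ, λ)`. -/
noncomputable def igG (μ lam x : ℝ) : ℝ :=
  Real.sqrt lam * (x - μ) / (Real.sqrt x * μ)

noncomputable def igGd (μ lam t : ℝ) : ℝ :=
  Real.sqrt lam * (t + μ) / (2 * (t * Real.sqrt t) * μ)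

noncomputable def igFZ (μ lam t : ℝ) : ℝ :=
  Real.exp (-(igG μ lam t) ^ 2 / 2) / Real.sqrt (2 * π) * igGd μ lam t


lemma sqrt_cube {t : ℝ} (ht : 0 ≤ t) : Real.sqrt (t ^ 3) = t * Real.sqrt t := by
  rw [show t ^ 3 = t ^ 2 * t by ring, Real.sqrt_mul (sq_nonneg t), Real.sqrt_sq ht]

lemma igPdf_eq {μ lam t : ℝ} (hlam : 0 ≤ lam) (ht : 0 < t) :
    igPdf μ lam t = Real.sqrt lam / (Real.sqrt (2 * π) * (t * Real.sqrt t)) *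
      Real.exp (-(lam * (t - μ) ^ 2) / (2 * μ ^ 2 * t)) := by
  unfold igPdf
  rw [Real.sqrt_div hlam, Real.sqrt_mul (by positivity : (0:ℝ) ≤ 2 * π), sqrt_cube ht.le]

lemma igG_sq {μ lam t : ℝ} (hlam : 0 ≤ lam) (ht : 0 ≤ t) :
    (igG μ lam t) ^ 2 = lam * (t - μ) ^ 2 / (t * μ ^ 2) := by
  unfold igG
  rw [div_pow, mul_pow, mul_pow, Real.sq_sqrt hlam, Real.sq_sqrt ht]

lemma igFZ_eq {μ lam t : ℝ} (hμ : 0 < μ) (hlam : 0 < lam) (ht : 0 < t) :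
    igFZ μ lam t = igPdf μ lam t * ((t + μ) / (2 * μ)) := by
  have hst : 0 < Real.sqrt t := Real.sqrt_pos.2 ht
  have h2π : 0 < Real.sqrt (2 * π) := Real.sqrt_pos.2 (by positivity)
  rw [igPdf_eq hlam.le ht]
  unfold igFZ igGd
  rw [igG_sq hlam.le ht.le,
    show -(lam * (t - μ) ^ 2 / (t * μ ^ 2)) / 2 = -(lam * (t - μ) ^ 2) / (2 * μ ^ 2 * t) by
      ring]
  field_simp

lemma igPdf_pos {μ lam t : ℝ} (hlam : 0 < lam) (ht : 0 < t) : 0 < igPdf μ lam t := by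
  unfold igPdf
  have : 0 < lam / (2 * π * t ^ 3) := by positivity
  positivity

lemma igGd_pos {μ lam t : ℝ} (hμ : 0 < μ) (hlam : 0 < lam) (ht : 0 < t) :
    0 < igGd μ lam t := by
  unfold igGd
  have h1 : 0 < Real.sqrt lam := Real.sqrt_pos.2 hlam
  have h2 : 0 < Real.sqrt t := Real.sqrt_pos.2 ht
  positivity

lemma igFZ_nonneg {μ lam t : ℝ} (hμ : 0 < μ) (hlam : 0 < lam) (ht : 0 < t) :
    0 ≤ igFZ μ lam t := by
  unfold igFZ
  have := Real.sqrt_nonneg (2 * π)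
  have := (igGd_pos (μ := μ) hμ hlam ht).le
  positivity

lemma rpow_three_halves {x : ℝ} (hx : 0 < x) : x ^ ((3 : ℝ) / 2) = x * Real.sqrt x := by
  rw [show (3 : ℝ) / 2 = 1 + 1 / 2 by norm_num, Real.rpow_add hx, Real.rpow_one,
    Real.sqrt_eq_rpow]

lemma igG_hasDerivAt {μ lam : ℝ} (hμ : 0 < μ) {t : ℝ} (ht : 0 < t) :
    HasDerivAt (igG μ lam) (igGd μ lam t) t := by
  have hst : 0 < Real.sqrt t := Real.sqrt_pos.2 ht
  have h2 : Real.sqrt t ^ 2 = t := Real.sq_sqrt ht.le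
  have h := (((hasDerivAt_id t).sub_const μ).const_mul (Real.sqrt lam)).div
      ((Real.hasDerivAt_sqrt ht.ne').mul_const μ) (by positivity)
  refine h.congr_deriv ?_
  symm
  unfold igGd
  set s := Real.sqrt t with hs
  rw [← h2]
  field_simp
  simp only [id]
  ring

lemma igG_strictMonoOn {μ lam : ℝ} (hμ : 0 < μ) (hlam : 0 < lam) :
    StrictMonoOn (igG μ lam) (Set.Ioi 0) := by
  apply strictMonoOn_of_deriv_pos (convex_Ioi 0)
  · intro t ht
    exact ((igG_hasDerivAt hμ (ht : (0:ℝ) < t)).continuousAt).continuousWithinAt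
  · intro t ht
    rw [interior_Ioi] at ht
    rw [(igG_hasDerivAt hμ ht).deriv]
    exact igGd_pos hμ hlam ht

lemma igG_rewrite {μ lam t : ℝ} (hμ : 0 < μ) (ht : 0 < t) :
    igG μ lam t = Real.sqrt lam / μ * Real.sqrt t - Real.sqrt lam * (Real.sqrt t)⁻¹ := by
  have hst : 0 < Real.sqrt t := Real.sqrt_pos.2 ht
  have h2 : Real.sqrt t ^ 2 = t := Real.sq_sqrt ht.le
  unfold igG
  field_simp
  linear_combination (-Real.sqrt lam) * h2

lemma igG_tendsto_atBot {μ lam : ℝ} (hμ : 0 < μ) (hlam : 0 < lam) :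
    Tendsto (igG μ lam) (𝓝[>] (0:ℝ)) atBot := by
  have hsq : Tendsto (fun t : ℝ => Real.sqrt t) (𝓝[>] (0:ℝ)) (𝓝[>] (0:ℝ)) := by
    rw [tendsto_nhdsWithin_iff]
    constructor
    · exact (Real.continuous_sqrt.tendsto' 0 0 Real.sqrt_zero).mono_left nhdsWithin_le_nhds
    · filter_upwards [self_mem_nhdsWithin] with t ht
      exact Real.sqrt_pos.2 ht
  have hinv : Tendsto (fun t : ℝ => Real.sqrt lam * (Real.sqrt t)⁻¹) (𝓝[>] (0:ℝ)) atTop :=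
    (tendsto_inv_nhdsGT_zero.comp hsq).const_mul_atTop (Real.sqrt_pos.2 hlam)
  have hneg : Tendsto (fun t : ℝ => -(Real.sqrt lam * (Real.sqrt t)⁻¹)) (𝓝[>] (0:ℝ)) atBot :=
    tendsto_neg_atTop_atBot.comp hinv
  have hmain : Tendsto (fun t : ℝ => Real.sqrt lam / μ * Real.sqrt t
      + -(Real.sqrt lam * (Real.sqrt t)⁻¹)) (𝓝[>] (0:ℝ)) atBot := by
    apply tendsto_atBot_add_left_of_ge' _ (Real.sqrt lam / μ * 1) _ hneg
    filter_upwards [Ioo_mem_nhdsGT_of_mem (Set.left_mem_Ico.2 one_pos)] with t ht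
    have : Real.sqrt t ≤ 1 := by
      rw [show (1:ℝ) = Real.sqrt 1 by simp]
      exact Real.sqrt_le_sqrt ht.2.le
    have h0 : 0 ≤ Real.sqrt lam / μ := by positivity
    nlinarith
  apply hmain.congr'
  filter_upwards [self_mem_nhdsWithin] with t ht
  rw [igG_rewrite hμ ht]
  ring

lemma igG_tendsto_atTop {μ lam : ℝ} (hμ : 0 < μ) (hlam : 0 < lam) :
    Tendsto (igG μ lam) atTop atTop := by
  have hsq : Tendsto (fun t : ℝ => Real.sqrt t) atTop atTop := by
    apply Tendsto.congr (fun x => (Real.sqrt_eq_rpow x).symm)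
    exact tendsto_rpow_atTop (by norm_num)
  have h1 : Tendsto (fun t : ℝ => Real.sqrt lam / μ * Real.sqrt t) atTop atTop :=
    hsq.const_mul_atTop (by positivity)
  have hmain : Tendsto (fun t : ℝ => Real.sqrt lam / μ * Real.sqrt t
      - Real.sqrt lam * (Real.sqrt t)⁻¹) atTop atTop := by
    apply tendsto_atTop_add_right_of_le' _ (-(Real.sqrt lam)) h1
    filter_upwards [eventually_ge_atTop (1:ℝ)] with t ht
    have h5 : 1 ≤ Real.sqrt t := by
      rw [show (1:ℝ) = Real.sqrt 1 by simp]
      exact Real.sqrt_le_sqrt ht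
    have h4 : (Real.sqrt t)⁻¹ ≤ 1 := inv_le_one_of_one_le₀ h5
    have h6 : Real.sqrt lam * (Real.sqrt t)⁻¹ ≤ Real.sqrt lam * 1 :=
      mul_le_mul_of_nonneg_left h4 (Real.sqrt_nonneg lam)
    nlinarith
  apply hmain.congr'
  filter_upwards [eventually_gt_atTop (0:ℝ)] with t ht
  rw [igG_rewrite hμ ht]

lemma igG_image_Ioc {μ lam x : ℝ} (hμ : 0 < μ) (hlam : 0 < lam) (hx : 0 < x) :
    igG μ lam '' Set.Ioc 0 x = Set.Iic (igG μ lam x) := by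
  apply Set.Subset.antisymm
  · rintro y ⟨t, ht, rfl⟩
    exact (igG_strictMonoOn hμ hlam).monotoneOn ht.1 hx ht.2
  · intro y hy
    have h1 : ∀ᶠ t in 𝓝[>] (0:ℝ), igG μ lam t < y :=
      (igG_tendsto_atBot hμ hlam).eventually (eventually_lt_atBot y)
    have h2 : Set.Ioo (0:ℝ) x ∈ 𝓝[>] (0:ℝ) := Ioo_mem_nhdsGT_of_mem (Set.left_mem_Ico.2 hx)
    obtain ⟨t0, ht0y, ht0⟩ := (h1.and (eventually_of_mem h2 fun t ht => ht)).exists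
    have hcont : ContinuousOn (igG μ lam) (Set.Icc t0 x) := fun t ht =>
      ((igG_hasDerivAt hμ (lt_of_lt_of_le ht0.1 ht.1)).continuousAt).continuousWithinAt
    obtain ⟨t, htmem, hty⟩ := intermediate_value_Icc ht0.2.le hcont ⟨ht0y.le, hy⟩
    exact ⟨t, ⟨lt_of_lt_of_le ht0.1 htmem.1, htmem.2⟩, hty⟩

lemma igG_image_Ioi {μ lam : ℝ} (hμ : 0 < μ) (hlam : 0 < lam) :
    igG μ lam '' Set.Ioi 0 = Set.univ := by
  apply Set.eq_univ_of_forall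
  intro y
  have h1 : ∀ᶠ t in 𝓝[>] (0:ℝ), igG μ lam t < y :=
    (igG_tendsto_atBot hμ hlam).eventually (eventually_lt_atBot y)
  obtain ⟨t0, ht0y, ht0⟩ := (h1.and self_mem_nhdsWithin).exists
  have h2 : ∀ᶠ t in atTop, y < igG μ lam t :=
    (igG_tendsto_atTop hμ hlam).eventually (eventually_gt_atTop y)
  obtain ⟨t1, ht1y, ht1⟩ := (h2.and (eventually_ge_atTop t0)).exists
  have hcont : ContinuousOn (igG μ lam) (Set.Icc t0 t1) := fun t ht =>
    ((igG_hasDerivAt hμ (lt_of_lt_of_le ht0 ht.1)).continuousAt).continuousWithinAt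
  obtain ⟨t, htmem, hty⟩ := intermediate_value_Icc ht1 hcont ⟨ht0y.le, ht1y.le⟩
  exact ⟨t, lt_of_lt_of_le ht0 htmem.1, hty⟩

lemma phi_eq : (fun s : ℝ => Real.exp (-s ^ 2 / 2) / Real.sqrt (2 * π))
    = fun s : ℝ => Real.exp (-(1/2 : ℝ) * s ^ 2) / Real.sqrt (2 * π) := by
  funext s; ring_nf

lemma phi_integrable : Integrable (fun s : ℝ => Real.exp (-s ^ 2 / 2) / Real.sqrt (2 * π)) := by
  rw [phi_eq]
  exact (integrable_exp_neg_mul_sq (by norm_num : (0:ℝ) < 1/2)).div_const _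

lemma phi_integral : (∫ s : ℝ, Real.exp (-s ^ 2 / 2) / Real.sqrt (2 * π)) = 1 := by
  rw [phi_eq, MeasureTheory.integral_div, integral_gaussian,
    show π / (1/2 : ℝ) = 2 * π by ring]
  exact div_self (Real.sqrt_pos.2 (by positivity)).ne'

lemma subst_Ioc {μ lam x : ℝ} (hμ : 0 < μ) (hlam : 0 < lam) (hx : 0 < x) :
    (∫ s in Set.Iic (igG μ lam x), Real.exp (-s ^ 2 / 2) / Real.sqrt (2 * π))
      = ∫ t in Set.Ioc 0 x, igFZ μ lam t := by
  rw [← igG_image_Ioc hμ hlam hx,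
    integral_image_eq_integral_abs_deriv_smul measurableSet_Ioc
      (fun t ht => (igG_hasDerivAt hμ ht.1).hasDerivWithinAt)
      (((igG_strictMonoOn hμ hlam).injOn).mono (fun t (ht : t ∈ Set.Ioc 0 x) => ht.1))]
  apply setIntegral_congr_fun measurableSet_Ioc
  intro t ht
  beta_reduce
  rw [smul_eq_mul, abs_of_pos (igGd_pos hμ hlam ht.1)]
  unfold igFZ; ring

lemma igFZ_total {μ lam : ℝ} (hμ : 0 < μ) (hlam : 0 < lam) :
    ∫ t in Set.Ioi 0, igFZ μ lam t = 1 := by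
  have h := integral_image_eq_integral_abs_deriv_smul measurableSet_Ioi
      (fun t (ht : t ∈ Set.Ioi (0:ℝ)) => (igG_hasDerivAt hμ ht).hasDerivWithinAt)
      ((igG_strictMonoOn hμ hlam).injOn)
      (fun s => Real.exp (-s ^ 2 / 2) / Real.sqrt (2 * π))
  rw [igG_image_Ioi hμ hlam, Measure.restrict_univ, phi_integral] at h
  refine Eq.trans ?_ h.symm
  apply setIntegral_congr_fun measurableSet_Ioi
  intro t ht
  beta_reduce
  rw [smul_eq_mul, abs_of_pos (igGd_pos hμ hlam ht)]
  unfold igFZ; ring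

lemma igFZ_integrableOn {μ lam : ℝ} (hμ : 0 < μ) (hlam : 0 < lam) :
    IntegrableOn (igFZ μ lam) (Set.Ioi 0) := by
  have h := (integrableOn_image_iff_integrableOn_abs_deriv_smul measurableSet_Ioi
      (fun t (ht : t ∈ Set.Ioi (0:ℝ)) => (igG_hasDerivAt hμ ht).hasDerivWithinAt)
      ((igG_strictMonoOn hμ hlam).injOn)
      (fun s => Real.exp (-s ^ 2 / 2) / Real.sqrt (2 * π))).mp ?_
  · apply h.congr_fun ?_ measurableSet_Ioi
    intro t ht
    beta_reduce
    rw [smul_eq_mul, abs_of_pos (igGd_pos hμ hlam ht)]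
    unfold igFZ; ring
  · rw [igG_image_Ioi hμ hlam]
    exact phi_integrable.integrableOn

lemma igPdf_measurable {μ lam : ℝ} : Measurable (igPdf μ lam) := by
  unfold igPdf
  fun_prop

lemma igPdf_integrableOn {μ lam : ℝ} (hμ : 0 < μ) (hlam : 0 < lam) :
    IntegrableOn (igPdf μ lam) (Set.Ioi 0) := by
  apply Integrable.mono ((igFZ_integrableOn hμ hlam).const_mul 2)
    igPdf_measurable.aestronglyMeasurable.restrict
  rw [ae_restrict_iff' measurableSet_Ioi]
  apply ae_of_all
  intro t ht
  have hP := igPdf_pos (μ := μ) hlam (ht : (0:ℝ) < t)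
  have hFZ := igFZ_nonneg (μ := μ) hμ hlam (ht : (0:ℝ) < t)
  rw [Real.norm_eq_abs, Real.norm_eq_abs, abs_of_pos hP, abs_of_nonneg (by positivity)]
  have ht'' : (0:ℝ) < t := ht
  rw [igFZ_eq hμ hlam ht]
  rw [show (2:ℝ) * (igPdf μ lam t * ((t + μ) / (2 * μ))) = igPdf μ lam t * ((t + μ) / μ) by
    field_simp]
  have h1 : (1:ℝ) ≤ (t + μ) / μ := (one_le_div hμ).2 (by linarith)
  nlinarith

lemma igPdf_mul_integrableOn {μ lam : ℝ} (hμ : 0 < μ) (hlam : 0 < lam) :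
    IntegrableOn (fun t => t / μ * igPdf μ lam t) (Set.Ioi 0) := by
  apply Integrable.mono ((igFZ_integrableOn hμ hlam).const_mul 2)
    ((measurable_id.div_const μ).mul igPdf_measurable).aestronglyMeasurable.restrict
  rw [ae_restrict_iff' measurableSet_Ioi]
  apply ae_of_all
  intro t ht
  have ht' : (0:ℝ) < t := ht
  have hP := igPdf_pos (μ := μ) hlam ht'
  have hFZ := igFZ_nonneg (μ := μ) hμ hlam ht'
  show ‖id t / μ * igPdf μ lam t‖ ≤ _
  rw [Real.norm_eq_abs, Real.norm_eq_abs, abs_of_nonneg (by positivity),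
    abs_of_nonneg (by positivity)]
  rw [igFZ_eq hμ hlam ht']
  rw [show (2:ℝ) * (igPdf μ lam t * ((t + μ) / (2 * μ))) = igPdf μ lam t * ((t + μ) / μ) by
    field_simp]
  have h1 : t / μ ≤ (t + μ) / μ := by
    gcongr
    linarith
  have : id t / μ * igPdf μ lam t = igPdf μ lam t * (t / μ) := by simp [mul_comm]
  rw [this]
  nlinarith

lemma inv_image {μ : ℝ} (hμ : 0 < μ) :
    (fun t : ℝ => μ ^ 2 / t) '' Set.Ioi 0 = Set.Ioi 0 := by
  apply Set.Subset.antisymm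
  · rintro y ⟨t, ht, rfl⟩
    exact div_pos (by positivity) (show (0:ℝ) < t from ht)
  · intro y hy
    exact ⟨μ ^ 2 / y, div_pos (by positivity) (show (0:ℝ) < y from hy), by
      field_simp⟩

lemma inv_pdf {μ lam t : ℝ} (hμ : 0 < μ) (hlam : 0 < lam) (ht : 0 < t) :
    μ ^ 2 / t ^ 2 * igPdf μ lam (μ ^ 2 / t) = t / μ * igPdf μ lam t := by
  have hmt : 0 < μ ^ 2 / t := by positivity
  have hst : 0 < Real.sqrt t := Real.sqrt_pos.2 ht
  have h2 : Real.sqrt t ^ 2 = t := Real.sq_sqrt ht.le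
  have h2π : 0 < Real.sqrt (2 * π) := Real.sqrt_pos.2 (by positivity)
  rw [igPdf_eq hlam.le hmt, igPdf_eq hlam.le ht]
  have hsq : Real.sqrt (μ ^ 2 / t) = μ / Real.sqrt t := by
    rw [Real.sqrt_div (sq_nonneg μ), Real.sqrt_sq hμ.le]
  rw [hsq, show -(lam * (μ ^ 2 / t - μ) ^ 2) / (2 * μ ^ 2 * (μ ^ 2 / t))
      = -(lam * (t - μ) ^ 2) / (2 * μ ^ 2 * t) by field_simp; ring]
  field_simp
  linear_combination h2

lemma igPdf_total {μ lam : ℝ} (hμ : 0 < μ) (hlam : 0 < lam) :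
    ∫ t in Set.Ioi 0, igPdf μ lam t = 1 := by
  have hinj : Set.InjOn (fun t : ℝ => μ ^ 2 / t) (Set.Ioi 0) := by
    intro a ha b hb hab
    simp only at hab
    have ha' : (0:ℝ) < a := ha
    have hb' : (0:ℝ) < b := hb
    field_simp at hab
    exact hab.symm
  have hderiv : ∀ t ∈ Set.Ioi (0:ℝ),
      HasDerivWithinAt (fun t : ℝ => μ ^ 2 / t) (-(μ ^ 2) / t ^ 2) (Set.Ioi 0) t := by
    intro t ht
    have ht' : (0:ℝ) < t := ht
    have h := (hasDerivAt_inv ht'.ne').const_mul (μ ^ 2)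
    have : μ ^ 2 * -(t ^ 2)⁻¹ = -(μ ^ 2) / t ^ 2 := by field_simp
    rw [this] at h
    exact (h.congr_deriv rfl).hasDerivWithinAt
  have hflip : ∫ t in Set.Ioi 0, igPdf μ lam t
      = ∫ t in Set.Ioi 0, t / μ * igPdf μ lam t := by
    conv_lhs => rw [← inv_image hμ]
    rw [integral_image_eq_integral_abs_deriv_smul measurableSet_Ioi hderiv hinj]
    apply setIntegral_congr_fun measurableSet_Ioi
    intro t ht
    have ht' : (0:ℝ) < t := ht
    beta_reduce
    rw [smul_eq_mul, show -(μ ^ 2) / t ^ 2 = -(μ ^ 2 / t ^ 2) by ring,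
      abs_of_neg (neg_lt_zero.mpr (by positivity : (0:ℝ) < μ ^ 2 / t ^ 2)), neg_neg]
    exact inv_pdf hμ hlam ht'
  have hint1 := igPdf_integrableOn hμ hlam
  have hint2 := igPdf_mul_integrableOn hμ hlam
  have hcomb : ∫ t in Set.Ioi 0, igFZ μ lam t
      = ∫ t in Set.Ioi 0, ((1/2 : ℝ) * igPdf μ lam t + (1/2 : ℝ) * (t / μ * igPdf μ lam t)) := by
    apply setIntegral_congr_fun measurableSet_Ioi
    intro t ht
    have ht' : (0:ℝ) < t := ht
    rw [igFZ_eq hμ hlam ht']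
    field_simp
    ring
  rw [igFZ_total hμ hlam, MeasureTheory.integral_add (hint1.const_mul _) (hint2.const_mul _),
    MeasureTheory.integral_const_mul, MeasureTheory.integral_const_mul, ← hflip] at hcomb
  linarith

/-- For `W ~ IG(μ, λ)`, `g(W)` is dominated by a standard Gaussian:
`Φ(g(x)) ≤ P(W ≤ x)` for all `x > 0`. A sufficient condition used in the proof:
the density of `g⁻¹(Z)` (namely `φ(g(x))·g'(x)` with
`g'(x) = λ^{1/2}(x+μ)/(2x^{3/2}μ)`) divided by the density of `W` equals
`(x+μ)/(2μ)`, which is increasing in `x`. -/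
theorem stmt_17 (μ lam : ℝ) (hμ : 0 < μ) (hlam : 0 < lam) :
    (∀ x : ℝ, 0 < x →
      (Real.exp (-(igG μ lam x) ^ 2 / 2) / Real.sqrt (2 * π) *
          (Real.sqrt lam * (x + μ) / (2 * x ^ ((3 : ℝ) / 2) * μ))) / igPdf μ lam x
        = (x + μ) / (2 * μ)) ∧
    (∀ x : ℝ, 0 < x →
      (∫ s in Set.Iic (igG μ lam x), Real.exp (-s ^ 2 / 2) / Real.sqrt (2 * π))
        ≤ ∫ t in Set.Ioc (0 : ℝ) x, igPdf μ lam t) := by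
  constructor
  · intro x hx
    rw [rpow_three_halves hx]
    have hfz : Real.exp (-(igG μ lam x) ^ 2 / 2) / Real.sqrt (2 * π) *
        (Real.sqrt lam * (x + μ) / (2 * (x * Real.sqrt x) * μ)) = igFZ μ lam x := rfl
    rw [hfz, igFZ_eq hμ hlam hx, mul_comm, mul_div_assoc,
      div_self (igPdf_pos hlam hx).ne', mul_one]
  · intro x hx
    rw [subst_Ioc hμ hlam hx]
    rcases le_or_gt x μ with hcase | hcase
    · apply setIntegral_mono_on
        ((igFZ_integrableOn hμ hlam).mono_set Set.Ioc_subset_Ioi_self)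
        ((igPdf_integrableOn hμ hlam).mono_set Set.Ioc_subset_Ioi_self)
        measurableSet_Ioc
      intro t ht
      rw [igFZ_eq hμ hlam ht.1]
      have hr : (t + μ) / (2 * μ) ≤ 1 := by
        rw [div_le_one (by positivity)]
        linarith [ht.2]
      nlinarith [igPdf_pos (μ := μ) hlam ht.1]
    · have hdisj : Disjoint (Set.Ioc (0:ℝ) x) (Set.Ioi x) := Set.Ioc_disjoint_Ioi le_rfl
      have hunion : Set.Ioc (0:ℝ) x ∪ Set.Ioi x = Set.Ioi 0 := Set.Ioc_union_Ioi_eq_Ioi hx.le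
      have hsplitF : (∫ t in Set.Ioc (0:ℝ) x, igFZ μ lam t) + ∫ t in Set.Ioi x, igFZ μ lam t
          = 1 := by
        rw [← setIntegral_union hdisj measurableSet_Ioi
          ((igFZ_integrableOn hμ hlam).mono_set Set.Ioc_subset_Ioi_self)
          ((igFZ_integrableOn hμ hlam).mono_set (Set.Ioi_subset_Ioi hx.le)),
          hunion, igFZ_total hμ hlam]
      have hsplitW : (∫ t in Set.Ioc (0:ℝ) x, igPdf μ lam t) + ∫ t in Set.Ioi x, igPdf μ lam t
          = 1 := by
        rw [← setIntegral_union hdisj measurableSet_Ioi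
          ((igPdf_integrableOn hμ hlam).mono_set Set.Ioc_subset_Ioi_self)
          ((igPdf_integrableOn hμ hlam).mono_set (Set.Ioi_subset_Ioi hx.le)),
          hunion, igPdf_total hμ hlam]
      have hcomp : (∫ t in Set.Ioi x, igPdf μ lam t) ≤ ∫ t in Set.Ioi x, igFZ μ lam t := by
        apply setIntegral_mono_on
          ((igPdf_integrableOn hμ hlam).mono_set (Set.Ioi_subset_Ioi hx.le))
          ((igFZ_integrableOn hμ hlam).mono_set (Set.Ioi_subset_Ioi hx.le))
          measurableSet_Ioi
        intro t ht
        have ht' : (0:ℝ) < t := lt_trans hx ht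
        rw [igFZ_eq hμ hlam ht']
        have hr : (1:ℝ) ≤ (t + μ) / (2 * μ) := by
          rw [le_div_iff₀ (by positivity)]
          have : μ < t := lt_trans hcase ht
          linarith
        nlinarith [igPdf_pos (μ := μ) hlam ht']
      linarith
end

section
/- Fix a nonnegative integer k and ℓ > 0, set p̂ = ℓ/(k+ℓ), and for p₀ ∈ (0,1) let D(p₀) = (k+ℓ)·(p̂·ln(p̂/p₀) + (1−p̂)·ln((1−p̂)/(1−p₀))) and G(p₀) = sign(p₀ − p̂)·(2D(p₀))^(1/2). Then the function p₀ ↦ (p₀ − p̂)/((1−p₀)·G(p₀)) is increasing on (0,1). A key step: the quantity (2D(p₀)/(k+ℓ))·(1−p̂) − (p₀−p̂)²/p₀ vanishes at p₀ = p̂ and its derivative in p₀ equals (p₀−p̂)²(1+p₀)/(p₀²(1−p₀)) ≥ 0, so it changes sign from − to + at p₀ = p̂. -/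
namespace Stmt18Aux
open Real Set


noncomputable def Dc (c h : ℝ) : ℝ → ℝ := fun p =>
  c * (h * Real.log (h / p) + (1 - h) * Real.log ((1 - h) / (1 - p)))

lemma hasDerivAt_Dc {c h : ℝ} (hh0 : 0 < h) (hh1 : h ≤ 1) {p : ℝ} (hp : p ∈ Ioo (0:ℝ) 1) :
    HasDerivAt (Dc c h) (c * (p - h) / (p * (1 - p))) p := by
  obtain ⟨hp0, hp1⟩ := hp
  have hp0' : p ≠ 0 := ne_of_gt hp0
  have h1p : (0:ℝ) < 1 - p := by linarith
  have t1 : HasDerivAt (fun q : ℝ => h * Real.log (h / q)) (h * -(1/p)) p := by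
    have hinner : HasDerivAt (fun q : ℝ => h / q) (h * (-(p^2)⁻¹)) p :=
      (hasDerivAt_inv hp0').const_mul h
    have := (hinner.log (by positivity)).const_mul h
    convert this using 1
    · rfl
    · rfl
    field_simp
  have t2 : HasDerivAt (fun q : ℝ => (1 - h) * Real.log ((1 - h) / (1 - q)))
      ((1 - h) * (1 / (1 - p))) p := by
    rcases eq_or_lt_of_le hh1 with he | hlt
    · simp only [← he, sub_self, zero_mul]
      exact hasDerivAt_const p 0
    · have hh1' : (0:ℝ) < 1 - h := by linarith
      have hinner : HasDerivAt (fun q : ℝ => (1 - h) / (1 - q))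
          ((0 * (1 - p) - (1 - h) * (0 - 1)) / (1 - p) ^ 2) p :=
        (hasDerivAt_const p (1 - h)).div ((hasDerivAt_const p 1).sub (hasDerivAt_id p))
          (ne_of_gt h1p)
      have := (hinner.log (by positivity)).const_mul (1 - h)
      convert this using 1
      · rfl
      · rfl
      field_simp
      ring
  have := (t1.add t2).const_mul c
  convert this using 1
  · rfl
  · rfl
  · rfl
  field_simp
  ring

lemma Dc_pos {c h : ℝ} (hc : 0 < c) (hh0 : 0 < h) (hh1 : h ≤ 1) {p : ℝ}
    (hp : p ∈ Ioo (0:ℝ) 1) (hne : p ≠ h) : 0 < Dc c h p := by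
  obtain ⟨hp0, hp1⟩ := hp
  have h1p : (0:ℝ) < 1 - p := by linarith
  have e1 : Real.log (h / p) = - Real.log (p / h) := by
    rw [← Real.log_inv]; congr 1; field_simp
  have l1 : h * Real.log (h / p) > h - p := by
    have : Real.log (p / h) < p / h - 1 :=
      Real.log_lt_sub_one_of_pos (by positivity) (by
        intro hc'; apply hne; field_simp at hc'; linarith)
    rw [e1]
    have := mul_lt_mul_of_pos_left (neg_lt_neg this) hh0
    calc h - p = h * -(p / h - 1) := by field_simp; ring
    _ < h * -Real.log (p / h) := by nlinarith [Real.log_lt_sub_one_of_pos (show (0:ℝ) < p/h by positivity) (by intro hc'; apply hne; field_simp at hc'; linarith)]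
  have l2 : (1 - h) * Real.log ((1 - h) / (1 - p)) ≥ p - h := by
    rcases eq_or_lt_of_le hh1 with he | hlt
    · simp only [← he, sub_self, zero_mul]; linarith
    · have hh1' : (0:ℝ) < 1 - h := by linarith
      have e2 : Real.log ((1 - h) / (1 - p)) = - Real.log ((1 - p) / (1 - h)) := by
        rw [← Real.log_inv]; congr 1; field_simp
      have : Real.log ((1 - p) / (1 - h)) ≤ (1 - p) / (1 - h) - 1 :=
        Real.log_le_sub_one_of_pos (by positivity)
      rw [e2]
      have h3 : (1 - h) * -Real.log ((1 - p) / (1 - h)) ≥ (1 - h) * -((1 - p) / (1 - h) - 1) := by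
        nlinarith
      calc (1 - h) * -Real.log ((1 - p) / (1 - h)) ≥ (1 - h) * -((1 - p) / (1 - h) - 1) := h3
      _ = p - h := by field_simp; ring
  have : h * Real.log (h / p) + (1 - h) * Real.log ((1 - h) / (1 - p)) > 0 := by linarith
  unfold Dc; positivity

lemma Dc_self {c h : ℝ} (hh0 : 0 < h) : Dc c h h = 0 := by
  unfold Dc
  rcases eq_or_ne h 1 with he | hne
  · simp [he]
  · rw [div_self (ne_of_gt hh0), div_self (fun hc' => hne (by linarith [sub_eq_zero.mp hc']))]
    simp

noncomputable def Qc (c h : ℝ) : ℝ → ℝ := fun p =>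
  2 * Dc c h p / c * (1 - h) - (p - h) ^ 2 / p

lemma hasDerivAt_Qc {c h : ℝ} (hc : 0 < c) (hh0 : 0 < h) (hh1 : h ≤ 1) {p : ℝ} (hp : p ∈ Ioo (0:ℝ) 1) :
    HasDerivAt (Qc c h) ((p - h) ^ 2 * (1 + p) / (p ^ 2 * (1 - p))) p := by
  obtain ⟨hp0, hp1⟩ := hp
  have hD := hasDerivAt_Dc (c := c) hh0 hh1 ⟨hp0, hp1⟩
  have h1 := ((hD.const_mul 2).div_const c).mul_const (1 - h)
  have h2 := (((hasDerivAt_id p).sub_const h).pow 2).div (hasDerivAt_id p) (ne_of_gt hp0)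
  have := h1.sub h2
  convert this using 1
  have h1p : (0:ℝ) < 1 - p := by linarith
  have hc' : c ≠ 0 := ne_of_gt hc
  · rfl
  · rfl
  · rfl
  simp only [id, Pi.pow_apply, Pi.sub_apply]
  field_simp
  ring

lemma Qc_self {c h : ℝ} (hh0 : 0 < h) : Qc c h h = 0 := by
  unfold Qc; rw [Dc_self hh0]; simp

lemma Qc_neg {c h : ℝ} (hc : 0 < c) (hh0 : 0 < h) (hh1 : h ≤ 1) {p : ℝ}
    (hp : p ∈ Ioo (0:ℝ) 1) (hph : p < h) : Qc c h p < 0 := by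
  obtain ⟨hp0, hp1⟩ := hp
  rcases eq_or_lt_of_le hh1 with he | hh1'
  · subst he
    have hne : p - 1 ≠ 0 := sub_ne_zero.mpr (ne_of_lt hph)
    unfold Qc
    simp only [sub_self, mul_zero, zero_sub, neg_lt, neg_zero]
    positivity
  · have hmono : StrictMonoOn (Qc c h) (Icc p h) := by
      apply strictMonoOn_of_deriv_pos (convex_Icc p h)
      · intro x hx
        exact (hasDerivAt_Qc hc hh0 hh1
          ⟨lt_of_lt_of_le hp0 hx.1, lt_of_le_of_lt hx.2 hh1'⟩).continuousAt.continuousWithinAt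
      · intro x hx
        rw [interior_Icc] at hx
        have hx1 : x ∈ Ioo (0:ℝ) 1 := ⟨lt_trans hp0 hx.1, lt_trans hx.2 hh1'⟩
        rw [(hasDerivAt_Qc hc hh0 hh1 hx1).deriv]
        have hne : x - h ≠ 0 := sub_ne_zero.mpr (ne_of_lt hx.2)
        have h2 : (0:ℝ) < (x - h) ^ 2 := lt_of_le_of_ne (sq_nonneg _) (Ne.symm (pow_ne_zero 2 hne))
        have h3 : (0:ℝ) < 1 - x := by linarith [hx1.2]
        have h4 : (0:ℝ) < x ^ 2 := pow_pos hx1.1 2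
        exact div_pos (by nlinarith [hx1.1]) (mul_pos h4 h3)
    have := hmono ⟨le_rfl, le_of_lt hph⟩ ⟨le_of_lt hph, le_rfl⟩ hph
    rwa [Qc_self hh0] at this

lemma Qc_pos {c h : ℝ} (hc : 0 < c) (hh0 : 0 < h) (hh1 : h ≤ 1) {p : ℝ}
    (hp : p ∈ Ioo (0:ℝ) 1) (hph : h < p) : 0 < Qc c h p := by
  obtain ⟨hp0, hp1⟩ := hp
  have hmono : StrictMonoOn (Qc c h) (Icc h p) := by
    apply strictMonoOn_of_deriv_pos (convex_Icc h p)
    · intro x hx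
      exact (hasDerivAt_Qc hc hh0 hh1
        ⟨lt_of_lt_of_le hh0 hx.1, lt_of_le_of_lt hx.2 hp1⟩).continuousAt.continuousWithinAt
    · intro x hx
      rw [interior_Icc] at hx
      have hx1 : x ∈ Ioo (0:ℝ) 1 := ⟨lt_trans hh0 hx.1, lt_trans hx.2 hp1⟩
      rw [(hasDerivAt_Qc hc hh0 hh1 hx1).deriv]
      have hne : x - h ≠ 0 := sub_ne_zero.mpr (ne_of_gt hx.1)
      have h2 : (0:ℝ) < (x - h) ^ 2 := lt_of_le_of_ne (sq_nonneg _) (Ne.symm (pow_ne_zero 2 hne))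
      have h3 : (0:ℝ) < 1 - x := by linarith [hx1.2]
      have h4 : (0:ℝ) < x ^ 2 := pow_pos hx1.1 2
      exact div_pos (by nlinarith [hx1.1]) (mul_pos h4 h3)
  have := hmono ⟨le_rfl, le_of_lt hph⟩ ⟨le_of_lt hph, le_rfl⟩ hph
  rwa [Qc_self hh0] at this

noncomputable def Rc (c h : ℝ) : ℝ → ℝ := fun p =>
  (p - h) ^ 2 * (1 - h) * c - 2 * Dc c h p * h * (1 - p) ^ 2

lemma hasDerivAt_Rc {c h : ℝ} (hh0 : 0 < h) (hh1 : h ≤ 1) {p : ℝ} (hp : p ∈ Ioo (0:ℝ) 1) :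
    HasDerivAt (Rc c h) (2 * c * (p - h) ^ 2 / p + 4 * h * (1 - p) * Dc c h p) p := by
  obtain ⟨hp0, hp1⟩ := hp
  have hD := hasDerivAt_Dc (c := c) hh0 hh1 ⟨hp0, hp1⟩
  have h1 := ((((hasDerivAt_id p).sub_const h).pow 2).mul_const (1 - h)).mul_const c
  have h2a := (hD.const_mul 2).mul_const h
  have h2b := ((hasDerivAt_const p 1).sub (hasDerivAt_id p)).pow 2
  have h2 := h2a.mul h2b
  have := h1.sub h2
  convert this using 1
  have h1p : (0:ℝ) < 1 - p := by linarith
  · rfl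
  · rfl
  · rfl
  simp only [id, Pi.pow_apply, Pi.sub_apply]
  field_simp
  ring

lemma Rc_self {c h : ℝ} (hh0 : 0 < h) : Rc c h h = 0 := by
  unfold Rc; rw [Dc_self hh0]; ring

lemma Rc_neg {c h : ℝ} (hc : 0 < c) (hh0 : 0 < h) (hh1' : h < 1) {p : ℝ}
    (hp : p ∈ Ioo (0:ℝ) 1) (hph : p < h) : Rc c h p < 0 := by
  obtain ⟨hp0, hp1⟩ := hp
  have hh1 : h ≤ 1 := le_of_lt hh1'
  have hmono : StrictMonoOn (Rc c h) (Icc p h) := by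
    apply strictMonoOn_of_deriv_pos (convex_Icc p h)
    · intro x hx
      exact (hasDerivAt_Rc hh0 hh1
        ⟨lt_of_lt_of_le hp0 hx.1, lt_of_le_of_lt hx.2 hh1'⟩).continuousAt.continuousWithinAt
    · intro x hx
      rw [interior_Icc] at hx
      have hx1 : x ∈ Ioo (0:ℝ) 1 := ⟨lt_trans hp0 hx.1, lt_trans hx.2 hh1'⟩
      rw [(hasDerivAt_Rc hh0 hh1 hx1).deriv]
      have hne : x - h ≠ 0 := sub_ne_zero.mpr (ne_of_lt hx.2)
      have h2 : (0:ℝ) < (x - h) ^ 2 := lt_of_le_of_ne (sq_nonneg _) (Ne.symm (pow_ne_zero 2 hne))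
      have h3 : (0:ℝ) < 1 - x := by linarith [hx1.2]
      have hDx := Dc_pos hc hh0 hh1 hx1 (ne_of_lt hx.2)
      have t1 : 0 < 2 * c * (x - h) ^ 2 / x := by
        apply div_pos _ hx1.1
        exact mul_pos (by linarith) h2
      have t2 : 0 < 4 * h * (1 - x) * Dc c h x :=
        mul_pos (mul_pos (mul_pos (by norm_num) hh0) h3) hDx
      linarith
  have := hmono ⟨le_rfl, le_of_lt hph⟩ ⟨le_of_lt hph, le_rfl⟩ hph
  rwa [Rc_self hh0] at this

lemma Rc_pos {c h : ℝ} (hc : 0 < c) (hh0 : 0 < h) (hh1 : h ≤ 1) {p : ℝ}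
    (hp : p ∈ Ioo (0:ℝ) 1) (hph : h < p) : 0 < Rc c h p := by
  obtain ⟨hp0, hp1⟩ := hp
  have hmono : StrictMonoOn (Rc c h) (Icc h p) := by
    apply strictMonoOn_of_deriv_pos (convex_Icc h p)
    · intro x hx
      exact (hasDerivAt_Rc hh0 hh1
        ⟨lt_of_lt_of_le hh0 hx.1, lt_of_le_of_lt hx.2 hp1⟩).continuousAt.continuousWithinAt
    · intro x hx
      rw [interior_Icc] at hx
      have hx1 : x ∈ Ioo (0:ℝ) 1 := ⟨lt_trans hh0 hx.1, lt_trans hx.2 hp1⟩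
      rw [(hasDerivAt_Rc hh0 hh1 hx1).deriv]
      have hne : x - h ≠ 0 := sub_ne_zero.mpr (ne_of_gt hx.1)
      have h2 : (0:ℝ) < (x - h) ^ 2 := lt_of_le_of_ne (sq_nonneg _) (Ne.symm (pow_ne_zero 2 hne))
      have h3 : (0:ℝ) < 1 - x := by linarith [hx1.2]
      have hDx := Dc_pos hc hh0 hh1 hx1 (ne_of_gt hx.1)
      have t1 : 0 < 2 * c * (x - h) ^ 2 / x := by
        apply div_pos _ hx1.1
        exact mul_pos (by linarith) h2
      have t2 : 0 < 4 * h * (1 - x) * Dc c h x :=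
        mul_pos (mul_pos (mul_pos (by norm_num) hh0) h3) hDx
      linarith
  have := hmono ⟨le_rfl, le_of_lt hph⟩ ⟨le_of_lt hph, le_rfl⟩ hph
  rwa [Rc_self hh0] at this

lemma hasDerivAt_fneg {c h x : ℝ} (hc : 0 < c) (hh0 : 0 < h) (hh1 : h ≤ 1)
    (hx : x ∈ Ioo (0:ℝ) 1) (hxh : x < h) :
    ∃ E, HasDerivAt (fun p => (h - p) / ((1 - p) * Real.sqrt (2 * Dc c h p))) E x ∧ 0 < E := by
  obtain ⟨hx0, hx1⟩ := hx
  have h1x : (0:ℝ) < 1 - x := by linarith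
  have hDx : 0 < Dc c h x := Dc_pos hc hh0 hh1 ⟨hx0, hx1⟩ (ne_of_lt hxh)
  have h2D : 0 < 2 * Dc c h x := by linarith
  set s := Real.sqrt (2 * Dc c h x) with hs_def
  have hs : 0 < s := Real.sqrt_pos.mpr h2D
  have hs2 : s ^ 2 = 2 * Dc c h x := Real.sq_sqrt (le_of_lt h2D)
  have hsq : HasDerivAt (fun q => Real.sqrt (2 * Dc c h q))
      (1 / (2 * s) * (2 * (c * (x - h) / (x * (1 - x))))) x := by
    have hD2 : HasDerivAt (fun q => 2 * Dc c h q) (2 * (c * (x - h) / (x * (1 - x)))) x :=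
      (hasDerivAt_Dc hh0 hh1 ⟨hx0, hx1⟩).const_mul 2
    exact (Real.hasDerivAt_sqrt (ne_of_gt h2D)).comp x hD2
  have hv : HasDerivAt (fun q => (1 - q) * Real.sqrt (2 * Dc c h q))
      ((0 - 1) * s + (1 - x) * (1 / (2 * s) * (2 * (c * (x - h) / (x * (1 - x)))))) x :=
    ((hasDerivAt_const x 1).sub (hasDerivAt_id x)).mul hsq
  have hu : HasDerivAt (fun q => h - q) (0 - 1) x :=
    (hasDerivAt_const x h).sub (hasDerivAt_id x)
  have hvne : (1 - x) * s ≠ 0 := (mul_pos h1x hs).ne'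
  have hF := hu.div hv hvne
  refine ⟨_, hF, ?_⟩
  apply div_pos _ (pow_pos (mul_pos h1x hs) 2)
  have hQ : Qc c h x < 0 := Qc_neg hc hh0 hh1 ⟨hx0, hx1⟩ hxh
  have expand : (0 - 1) * ((1 - x) * s) -
      (h - x) * ((0 - 1) * s + (1 - x) * (1 / (2 * s) * (2 * (c * (x - h) / (x * (1 - x)))))) =
      ((h - 1) * s ^ 2 + c * (x - h) ^ 2 / x) / s := by
    field_simp
    ring
  rw [expand, hs2]
  have hQval : (h - 1) * (2 * Dc c h x) + c * (x - h) ^ 2 / x = -(c * Qc c h x) := by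
    unfold Qc
    field_simp
    ring
  rw [hQval]
  have : 0 < c * -Qc c h x := mul_pos hc (by linarith)
  exact div_pos (by linarith) hs

lemma hasDerivAt_fpos {c h x : ℝ} (hc : 0 < c) (hh0 : 0 < h) (hh1 : h ≤ 1)
    (hx : x ∈ Ioo (0:ℝ) 1) (hxh : h < x) :
    ∃ E, HasDerivAt (fun p => (p - h) / ((1 - p) * Real.sqrt (2 * Dc c h p))) E x ∧ 0 < E := by
  obtain ⟨hx0, hx1⟩ := hx
  have h1x : (0:ℝ) < 1 - x := by linarith
  have hDx : 0 < Dc c h x := Dc_pos hc hh0 hh1 ⟨hx0, hx1⟩ (ne_of_gt hxh)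
  have h2D : 0 < 2 * Dc c h x := by linarith
  set s := Real.sqrt (2 * Dc c h x) with hs_def
  have hs : 0 < s := Real.sqrt_pos.mpr h2D
  have hs2 : s ^ 2 = 2 * Dc c h x := Real.sq_sqrt (le_of_lt h2D)
  have hsq : HasDerivAt (fun q => Real.sqrt (2 * Dc c h q))
      (1 / (2 * s) * (2 * (c * (x - h) / (x * (1 - x))))) x := by
    have hD2 : HasDerivAt (fun q => 2 * Dc c h q) (2 * (c * (x - h) / (x * (1 - x)))) x :=
      (hasDerivAt_Dc hh0 hh1 ⟨hx0, hx1⟩).const_mul 2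
    exact (Real.hasDerivAt_sqrt (ne_of_gt h2D)).comp x hD2
  have hv : HasDerivAt (fun q => (1 - q) * Real.sqrt (2 * Dc c h q))
      ((0 - 1) * s + (1 - x) * (1 / (2 * s) * (2 * (c * (x - h) / (x * (1 - x)))))) x :=
    ((hasDerivAt_const x 1).sub (hasDerivAt_id x)).mul hsq
  have hu : HasDerivAt (fun q => q - h) (1 - 0) x :=
    (hasDerivAt_id x).sub (hasDerivAt_const x h)
  have hvne : (1 - x) * s ≠ 0 := (mul_pos h1x hs).ne'
  have hF := hu.div hv hvne
  refine ⟨_, hF, ?_⟩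
  apply div_pos _ (pow_pos (mul_pos h1x hs) 2)
  have hQ : 0 < Qc c h x := Qc_pos hc hh0 hh1 ⟨hx0, hx1⟩ hxh
  have expand : (1 - 0) * ((1 - x) * s) -
      (x - h) * ((0 - 1) * s + (1 - x) * (1 / (2 * s) * (2 * (c * (x - h) / (x * (1 - x)))))) =
      ((1 - h) * s ^ 2 - c * (x - h) ^ 2 / x) / s := by
    field_simp
    ring
  rw [expand, hs2]
  have hQval : (1 - h) * (2 * Dc c h x) - c * (x - h) ^ 2 / x = c * Qc c h x := by
    unfold Qc
    field_simp
  rw [hQval]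
  exact div_pos (mul_pos hc hQ) hs


lemma cross_neg {c h x : ℝ} (hc : 0 < c) (hh0 : 0 < h) (hh1' : h < 1)
    (hx : x ∈ Ioo (0:ℝ) 1) (hxh : x < h) :
    (h - x) / ((1 - x) * Real.sqrt (2 * Dc c h x)) < Real.sqrt (h / ((1 - h) * c)) := by
  obtain ⟨hx0, hx1⟩ := hx
  have hh1 : h ≤ 1 := le_of_lt hh1'
  have h1x : (0:ℝ) < 1 - x := by linarith
  have h1h : (0:ℝ) < 1 - h := by linarith
  have hDx : 0 < Dc c h x := Dc_pos hc hh0 hh1 ⟨hx0, hx1⟩ (ne_of_lt hxh)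
  have h2D : 0 < 2 * Dc c h x := by linarith
  have hs : 0 < Real.sqrt (2 * Dc c h x) := Real.sqrt_pos.mpr h2D
  have hR : Rc c h x < 0 := Rc_neg hc hh0 hh1' ⟨hx0, hx1⟩ hxh
  simp only [Rc] at hR
  apply lt_of_pow_lt_pow_left₀ 2 (Real.sqrt_nonneg _)
  rw [div_pow, mul_pow, Real.sq_sqrt h2D.le, Real.sq_sqrt (by positivity : (0:ℝ) ≤ h / ((1 - h) * c))]
  rw [div_lt_div_iff₀ (by positivity) (by positivity)]
  nlinarith [hR]

lemma cross_pos {c h y : ℝ} (hc : 0 < c) (hh0 : 0 < h)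
    (hy : y ∈ Ioo (0:ℝ) 1) (hyh : h < y) :
    Real.sqrt (h / ((1 - h) * c)) < (y - h) / ((1 - y) * Real.sqrt (2 * Dc c h y)) := by
  obtain ⟨hy0, hy1⟩ := hy
  have hh1' : h < 1 := lt_trans hyh hy1
  have hh1 : h ≤ 1 := le_of_lt hh1'
  have h1y : (0:ℝ) < 1 - y := by linarith
  have h1h : (0:ℝ) < 1 - h := by linarith
  have hDy : 0 < Dc c h y := Dc_pos hc hh0 hh1 ⟨hy0, hy1⟩ (ne_of_gt hyh)
  have h2D : 0 < 2 * Dc c h y := by linarith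
  have hs : 0 < Real.sqrt (2 * Dc c h y) := Real.sqrt_pos.mpr h2D
  have hR : 0 < Rc c h y := Rc_pos hc hh0 hh1 ⟨hy0, hy1⟩ hyh
  simp only [Rc] at hR
  have hrhs : 0 < (y - h) / ((1 - y) * Real.sqrt (2 * Dc c h y)) :=
    div_pos (by linarith) (mul_pos h1y hs)
  apply lt_of_pow_lt_pow_left₀ 2 (le_of_lt hrhs)
  rw [div_pow, mul_pow, Real.sq_sqrt h2D.le, Real.sq_sqrt (by positivity : (0:ℝ) ≤ h / ((1 - h) * c))]
  rw [div_lt_div_iff₀ (by positivity) (by positivity)]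
  nlinarith [hR]

lemma SM_neg {c h : ℝ} (hc : 0 < c) (hh0 : 0 < h) (hh1 : h ≤ 1) :
    StrictMonoOn (fun p => (h - p) / ((1 - p) * Real.sqrt (2 * Dc c h p)))
      (Ioo (0:ℝ) 1 ∩ Iio h) := by
  have hU : IsOpen (Ioo (0:ℝ) 1 ∩ Iio h) := isOpen_Ioo.inter isOpen_Iio
  apply strictMonoOn_of_deriv_pos ((convex_Ioo 0 1).inter (convex_Iio h))
  · intro x hx
    obtain ⟨E, hE, _⟩ := hasDerivAt_fneg hc hh0 hh1 hx.1 hx.2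
    exact hE.continuousAt.continuousWithinAt
  · intro x hx
    rw [hU.interior_eq] at hx
    obtain ⟨E, hE, hEpos⟩ := hasDerivAt_fneg hc hh0 hh1 hx.1 hx.2
    rw [hE.deriv]
    exact hEpos

lemma SM_pos {c h : ℝ} (hc : 0 < c) (hh0 : 0 < h) (hh1 : h ≤ 1) :
    StrictMonoOn (fun p => (p - h) / ((1 - p) * Real.sqrt (2 * Dc c h p)))
      (Ioo (0:ℝ) 1 ∩ Ioi h) := by
  have hU : IsOpen (Ioo (0:ℝ) 1 ∩ Ioi h) := isOpen_Ioo.inter isOpen_Ioi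
  apply strictMonoOn_of_deriv_pos ((convex_Ioo 0 1).inter (convex_Ioi h))
  · intro x hx
    obtain ⟨E, hE, _⟩ := hasDerivAt_fpos hc hh0 hh1 hx.1 hx.2
    exact hE.continuousAt.continuousWithinAt
  · intro x hx
    rw [hU.interior_eq] at hx
    obtain ⟨E, hE, hEpos⟩ := hasDerivAt_fpos hc hh0 hh1 hx.1 hx.2
    rw [hE.deriv]
    exact hEpos

lemma main_SM {c h : ℝ} (hc : 0 < c) (hh0 : 0 < h) (hh1 : h ≤ 1) :
    StrictMonoOn (fun p => if p = h then Real.sqrt (h / ((1 - h) * c))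
      else (p - h) / ((1 - p) * (Real.sign (p - h) * Real.sqrt (2 * Dc c h p))))
      (Ioo (0:ℝ) 1) := by
  have val_neg : ∀ p ∈ Ioo (0:ℝ) 1, p < h →
      (if p = h then Real.sqrt (h / ((1 - h) * c))
        else (p - h) / ((1 - p) * (Real.sign (p - h) * Real.sqrt (2 * Dc c h p))))
      = (h - p) / ((1 - p) * Real.sqrt (2 * Dc c h p)) := by
    intro p _ hlt
    rw [if_neg (ne_of_lt hlt), Real.sign_of_neg (by linarith : p - h < 0)]
    rw [show (1 - p) * (-1 * Real.sqrt (2 * Dc c h p))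
        = -((1 - p) * Real.sqrt (2 * Dc c h p)) from by ring, div_neg, ← neg_div]
    congr 1
    ring
  have val_pos : ∀ p ∈ Ioo (0:ℝ) 1, h < p →
      (if p = h then Real.sqrt (h / ((1 - h) * c))
        else (p - h) / ((1 - p) * (Real.sign (p - h) * Real.sqrt (2 * Dc c h p))))
      = (p - h) / ((1 - p) * Real.sqrt (2 * Dc c h p)) := by
    intro p _ hlt
    rw [if_neg (ne_of_gt hlt), Real.sign_of_pos (by linarith : 0 < p - h), one_mul]
  intro x hx y hy hxy
  simp only
  rcases lt_trichotomy y h with hyh | hyh | hyh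
  · have hxh : x < h := lt_trans hxy hyh
    rw [val_neg x hx hxh, val_neg y hy hyh]
    exact SM_neg hc hh0 hh1 ⟨hx, hxh⟩ ⟨hy, hyh⟩ hxy
  · have hh1' : h < 1 := hyh ▸ hy.2
    have hxh : x < h := hyh ▸ hxy
    rw [val_neg x hx hxh, hyh, if_pos rfl]
    exact cross_neg hc hh0 hh1' hx hxh
  · rw [val_pos y hy hyh]
    rcases lt_trichotomy x h with hxh | hxh | hxh
    · have hh1' : h < 1 := lt_trans hyh hy.2
      rw [val_neg x hx hxh]
      exact lt_trans (cross_neg hc hh0 hh1' hx hxh) (cross_pos hc hh0 hy hyh)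
    · rw [hxh, if_pos rfl]
      exact cross_pos hc hh0 hy hyh
    · rw [val_pos x hx hxh]
      exact SM_pos hc hh0 hh1 ⟨hx, hxh⟩ ⟨hy, hyh⟩ hxy

end Stmt18Aux

open Stmt18Aux in
/-- With `p̂ = ℓ/(k+ℓ)`, `D(p₀) = (k+ℓ)(p̂ ln(p̂/p₀) + (1−p̂) ln((1−p̂)/(1−p₀)))` and
`G(p₀) = sign(p₀−p̂)·(2D(p₀))^{1/2}`, the function `p₀ ↦ (p₀−p̂)/((1−p₀)G(p₀))`
(extended by its limit at `p₀ = p̂`) is increasing on `(0,1)`. Key step: the quantity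
`(2D(p₀)/(k+ℓ))(1−p̂) − (p₀−p̂)²/p₀` vanishes at `p₀ = p̂` and has derivative
`(p₀−p̂)²(1+p₀)/(p₀²(1−p₀)) ≥ 0`, so it changes sign from − to + at `p̂`. -/
theorem stmt_18 (k : ℕ) (l : ℝ) (hl : 0 < l) :
    let phat : ℝ := l / (k + l)
    let D : ℝ → ℝ := fun p₀ =>
      ((k : ℝ) + l) * (phat * Real.log (phat / p₀) +
        (1 - phat) * Real.log ((1 - phat) / (1 - p₀)))
    let G : ℝ → ℝ := fun p₀ => Real.sign (p₀ - phat) * Real.sqrt (2 * D p₀)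
    StrictMonoOn
      (fun p₀ => if p₀ = phat then Real.sqrt (phat / ((1 - phat) * ((k : ℝ) + l)))
        else (p₀ - phat) / ((1 - p₀) * G p₀)) (Set.Ioo 0 1) ∧
    2 * D phat / ((k : ℝ) + l) * (1 - phat) - (phat - phat) ^ 2 / phat = 0 ∧
    ∀ p₀ ∈ Set.Ioo (0 : ℝ) 1,
      HasDerivAt (fun q => 2 * D q / ((k : ℝ) + l) * (1 - phat) - (q - phat) ^ 2 / q)
        ((p₀ - phat) ^ 2 * (1 + p₀) / (p₀ ^ 2 * (1 - p₀))) p₀ := by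
  intro phat D G
  have hc : (0:ℝ) < (k:ℝ) + l := add_pos_of_nonneg_of_pos (Nat.cast_nonneg k) hl
  have hh0 : 0 < phat := div_pos hl hc
  have hh1 : phat ≤ 1 := by
    rw [div_le_one hc]
    have : (0:ℝ) ≤ (k:ℝ) := Nat.cast_nonneg k
    linarith
  refine ⟨main_SM hc hh0 hh1, ?_, fun p hp => hasDerivAt_Qc hc hh0 hh1 hp⟩
  have hD0 : D phat = 0 := Dc_self (c := (k:ℝ) + l) hh0
  rw [hD0]
  simp
end
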